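/- Let K be a field of characteristic 3, δ ∈ K, and let F_δ be the span in M_3(K) of I_3, A = [[0,1,0],[0,0,0],[1,0,0]], B = [[0,0,0],[0,0,1],[δ,0,0]], and C = [[1,0,1],[-1,0,0],[-1,-δ,-1]]. Then F_δ is spanned by its singular elements. -/
import Mathlib


/-- The exceptional space `F_δ ⊆ M_3(K)` in characteristic 3. -/
def Fdelta (K : Type*) [Field K] (δ : K) : Submodule K (Matrix (Fin 3) (Fin 3) K) :=
  Submodule.span K
    {(1 : Matrix (Fin 3) (Fin 3) K),
      !![0, 1, 0; 0, 0, 0; 1, 0, 0],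
      !![0, 0, 0; 0, 0, 1; δ, 0, 0],
      !![1, 0, 1; -1, 0, 0; -1, -δ, -1]}

/-- `F_δ` is spanned by its singular elements. -/
theorem stmt15 {K : Type*} [Field K] [CharP K 3] (δ : K) :
    Submodule.span K {M : Matrix (Fin 3) (Fin 3) K | M ∈ Fdelta K δ ∧ M.det = 0} =
      Fdelta K δ := by
  set A : Matrix (Fin 3) (Fin 3) K := !![0, 1, 0; 0, 0, 0; 1, 0, 0] with hA
  set B : Matrix (Fin 3) (Fin 3) K := !![0, 0, 0; 0, 0, 1; δ, 0, 0] with hB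
  set C : Matrix (Fin 3) (Fin 3) K := !![1, 0, 1; -1, 0, 0; -1, -δ, -1] with hC
  have memF : ∀ M ∈ ({1, A, B, C} : Set (Matrix (Fin 3) (Fin 3) K)), M ∈ Fdelta K δ :=
    fun M hM => Submodule.subset_span hM
  have h1F : (1 : Matrix (Fin 3) (Fin 3) K) ∈ Fdelta K δ := memF 1 (by left; rfl)
  have hAF : A ∈ Fdelta K δ := memF A (by right; left; rfl)
  have hBF : B ∈ Fdelta K δ := memF B (by right; right; left; rfl)
  have hCF : C ∈ Fdelta K δ := memF C (by right; right; right; rfl)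
  set S : Set (Matrix (Fin 3) (Fin 3) K) := {M | M ∈ Fdelta K δ ∧ M.det = 0} with hS
  -- singular elements
  have hAS : A ∈ S := ⟨hAF, by simp [hA, Matrix.det_fin_three]⟩
  have hBS : B ∈ S := ⟨hBF, by simp [hB, Matrix.det_fin_three]⟩
  have hCB : C - B = !![1, 0, 1; -1, 0, -1; -1 - δ, -δ, -1] := by
    ext i j; fin_cases i <;> fin_cases j <;>
      simp [hB, hC, Matrix.sub_apply, Matrix.vecHead, Matrix.vecTail] <;> ring
  have hCBS : C - B ∈ S := by
    refine ⟨sub_mem hCF hBF, ?_⟩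
    rw [hCB, Matrix.det_fin_three]
    simp [Matrix.vecHead, Matrix.vecTail]
  have hM1 : (1 : Matrix (Fin 3) (Fin 3) K) + (δ + 1) • A + C =
      !![2, δ + 1, 1; -1, 1, 0; δ, -δ, 0] := by
    ext i j; fin_cases i <;> fin_cases j <;>
      simp [hA, hC, Matrix.add_apply, Matrix.smul_apply, Matrix.one_apply,
        Matrix.vecHead, Matrix.vecTail] <;> ring
  have hM1S : (1 : Matrix (Fin 3) (Fin 3) K) + (δ + 1) • A + C ∈ S := by
    refine ⟨add_mem (add_mem h1F (Submodule.smul_mem _ _ hAF)) hCF, ?_⟩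
    rw [hM1, Matrix.det_fin_three]
    simp [Matrix.vecHead, Matrix.vecTail]
  -- span membership of the generators
  have hAsp : A ∈ Submodule.span K S := Submodule.subset_span hAS
  have hBsp : B ∈ Submodule.span K S := Submodule.subset_span hBS
  have hCsp : C ∈ Submodule.span K S := by
    have : C = (C - B) + B := by abel
    rw [this]
    exact add_mem (Submodule.subset_span hCBS) hBsp
  have h1sp : (1 : Matrix (Fin 3) (Fin 3) K) ∈ Submodule.span K S := by
    have : (1 : Matrix (Fin 3) (Fin 3) K) =
        ((1 : Matrix (Fin 3) (Fin 3) K) + (δ + 1) • A + C) - (δ + 1) • A - C := by abel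
    rw [this]
    exact sub_mem (sub_mem (Submodule.subset_span hM1S)
      (Submodule.smul_mem _ _ hAsp)) hCsp
  apply le_antisymm
  · exact Submodule.span_le.2 fun M hM => hM.1
  · rw [Fdelta]
    apply Submodule.span_le.2
    intro M hM
    rcases hM with h | h | h | h <;> subst h
    · exact h1sp
    · exact hAsp
    · exact hBsp
    · exact hCsp
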